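/- Suppose Assumption 1 holds: Σ_{r=0}^∞ sup_{τ∈ℤ} (ξ_{τ,r}² σ_{τ−r}²) < ∞ and for every t ∈ ℤ the series μ_t := Σ_{r=0}^∞ ξ_{t,r} φ_0(t−r) converges. For each t let Y_t = μ_t + Z_t, where Z_t is the L² limit of the partial sums Σ_{r=0}^{n} ξ_{t,r} ε_{t−r}. Then the MA(∞) process (Y_t) solves the equation: for every t ∈ ℤ, Y_t = φ_0(t) + Σ_{m=1}^p φ_m(t) Y_{t−m} + ε_t almost surely. -/

import Mathlib

open Finset

/-- The `k × k` solution matrix `Φ_{t,k}`: its (1-based) `(i,j)` entry is `-1` if `i = j-1`,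
`φ_{1+i−j}(t−k+i)` if `0 ≤ i−j ≤ p−1`, and `0` otherwise. -/
noncomputable def PhiMat (p : ℕ) (φ : ℕ → ℤ → ℝ) (t : ℤ) (k : ℕ) :
    Matrix (Fin k) (Fin k) ℝ :=
  fun i j =>
    if (i : ℕ) + 1 = (j : ℕ) then -1
    else if (j : ℕ) ≤ (i : ℕ) ∧ (i : ℕ) - (j : ℕ) + 1 ≤ p then
      φ ((i : ℕ) - (j : ℕ) + 1) (t - (k : ℤ) + (i : ℕ) + 1)
    else 0

/-- The Hessenbergian (Green function) `ξ_{t,k} = det Φ_{t,k}`, with the conventions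
`ξ_{t,0} = 1` (empty determinant) and `ξ_{t,k} = 0` for `k < 0`. -/
noncomputable def xi (p : ℕ) (φ : ℕ → ℤ → ℝ) (t : ℤ) (k : ℤ) : ℝ :=
  if 0 ≤ k then (PhiMat p φ t k.toNat).det else 0


lemma xi_neg (p : ℕ) (φ : ℕ → ℤ → ℝ) (t : ℤ) {k : ℤ} (h : k < 0) : xi p φ t k = 0 := by
  simp [xi, not_le.2 h]
lemma xi_natCast (p : ℕ) (φ : ℕ → ℤ → ℝ) (t : ℤ) (k : ℕ) :
    xi p φ t (k : ℤ) = (PhiMat p φ t k).det := by simp [xi]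
lemma xi_zero (p : ℕ) (φ : ℕ → ℤ → ℝ) (t : ℤ) : xi p φ t 0 = 1 := by
  have h := xi_natCast p φ t 0; simpa using h
lemma PhiMat_apply (p : ℕ) (φ : ℕ → ℤ → ℝ) (t : ℤ) (k : ℕ) (i j : Fin k) :
    PhiMat p φ t k i j =
      if (i : ℕ) + 1 = (j : ℕ) then -1
      else if (j : ℕ) ≤ (i : ℕ) ∧ (i : ℕ) - (j : ℕ) + 1 ≤ p then
        φ ((i : ℕ) - (j : ℕ) + 1) (t - (k : ℤ) + (i : ℕ) + 1)
      else 0 := rfl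


lemma succAbove_val {n : ℕ} (j : Fin (n+1)) (c : Fin n) :
    ((j.succAbove c : Fin (n+1)) : ℕ) = if (c:ℕ) < (j:ℕ) then (c:ℕ) else (c:ℕ)+1 := by
  rcases lt_or_ge (Fin.castSucc c) j with h | h
  · rw [Fin.succAbove_of_castSucc_lt _ _ h]
    have h' : (c:ℕ) < (j:ℕ) := h
    simp [h']
  · rw [Fin.succAbove_of_le_castSucc _ _ h]
    have h' : (j:ℕ) ≤ (c:ℕ) := h
    simp [Nat.not_lt.2 h']

lemma minor_det (p : ℕ) (φ : ℕ → ℤ → ℝ) (t : ℤ) (n : ℕ) (j : Fin (n+1)) :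
    ((PhiMat p φ t (n+1)).submatrix (Fin.last n).succAbove j.succAbove).det
      = (-1:ℝ)^(n - (j:ℕ)) * (PhiMat p φ (t - ((n:ℤ) + 1 - (j:ℕ))) (j:ℕ)).det := by
  set B := (PhiMat p φ t (n+1)).submatrix (Fin.last n).succAbove j.succAbove with hBdef
  have hrow : ∀ r : Fin n, (((Fin.last n).succAbove r : Fin (n+1)) : ℕ) = (r : ℕ) := by
    intro r; rw [Fin.succAbove_last]; simp
  have hBval : ∀ (r c : Fin n), B r c =
      (if (r:ℕ) + 1 = ((j.succAbove c : Fin (n+1)) : ℕ) then (-1:ℝ)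
       else if ((j.succAbove c : Fin (n+1)) : ℕ) ≤ (r:ℕ) ∧ (r:ℕ) - ((j.succAbove c : Fin (n+1)) : ℕ) + 1 ≤ p then
         φ ((r:ℕ) - ((j.succAbove c : Fin (n+1)) : ℕ) + 1) (t - ((n:ℤ)+1) + (r:ℕ) + 1)
       else 0) := by
    intro r c
    rw [hBdef, Matrix.submatrix_apply, PhiMat_apply, hrow]
    push_cast
    ring_nf
  have hn' : (j:ℕ) + (n - (j:ℕ)) = n := by omega
  set e := finSumFinEquiv.trans (finCongr hn') with he
  rw [← Matrix.det_submatrix_equiv_self e B]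
  have heL : ∀ r : Fin (j:ℕ), ((e (Sum.inl r)) : ℕ) = (r:ℕ) := by
    intro r; simp [he]
  have heR : ∀ r : Fin (n-(j:ℕ)), ((e (Sum.inr r)) : ℕ) = (j:ℕ) + (r:ℕ) := by
    intro r; simp [he]
  set M := B.submatrix e e with hM
  have h12 : M.toBlocks₁₂ = 0 := by
    ext r c
    have hc : ((j.succAbove (e (Sum.inr c)) : Fin (n+1)) : ℕ) = (j:ℕ) + (c:ℕ) + 1 := by
      rw [succAbove_val, heR]
      have : ¬ ((j:ℕ) + (c:ℕ) < (j:ℕ)) := by omega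
      simp [this]
    have hr := heL r
    have hrj : (r:ℕ) < (j:ℕ) := r.isLt
    simp only [Matrix.toBlocks₁₂, Matrix.of_apply, hM, Matrix.submatrix_apply, Matrix.zero_apply]
    rw [hBval, hc, hr]
    have h1 : ¬ ((r:ℕ) + 1 = (j:ℕ) + (c:ℕ) + 1) := by omega
    have h2 : ¬ ((j:ℕ) + (c:ℕ) + 1 ≤ (r:ℕ) ∧ (r:ℕ) - ((j:ℕ)+(c:ℕ)+1) + 1 ≤ p) := by omega
    rw [if_neg h1, if_neg h2]
  have h11 : M.toBlocks₁₁ = PhiMat p φ (t - ((n:ℤ) + 1 - (j:ℕ))) (j:ℕ) := by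
    ext r c
    have hc : ((j.succAbove (e (Sum.inl c)) : Fin (n+1)) : ℕ) = (c:ℕ) := by
      rw [succAbove_val, heL]
      have : (c:ℕ) < (j:ℕ) := c.isLt
      simp [this]
    simp only [Matrix.toBlocks₁₁, Matrix.of_apply, hM, Matrix.submatrix_apply]
    rw [hBval, hc, heL, PhiMat_apply]
    have harg : t - ((n:ℤ)+1) + (r:ℕ) + 1 = t - ((n:ℤ) + 1 - (j:ℕ)) - ((j:ℕ):ℤ) + (r:ℕ) + 1 := by
      ring
    rw [harg]
  have hD : M.toBlocks₂₂.det = (-1:ℝ)^(n - (j:ℕ)) := by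
    have htri : M.toBlocks₂₂.BlockTriangular OrderDual.toDual := by
      intro r c hrc
      have hrc' : (r:ℕ) < (c:ℕ) := hrc
      have hcval : ((j.succAbove (e (Sum.inr c)) : Fin (n+1)) : ℕ) = (j:ℕ) + (c:ℕ) + 1 := by
        rw [succAbove_val, heR]
        have : ¬ ((j:ℕ) + (c:ℕ) < (j:ℕ)) := by omega
        simp [this]
      simp only [Matrix.toBlocks₂₂, Matrix.of_apply, hM, Matrix.submatrix_apply]
      rw [hBval, hcval, heR]
      have h1 : ¬ ((j:ℕ) + (r:ℕ) + 1 = (j:ℕ) + (c:ℕ) + 1) := by omega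
      have h2 : ¬ ((j:ℕ) + (c:ℕ) + 1 ≤ (j:ℕ) + (r:ℕ) ∧ (j:ℕ)+(r:ℕ) - ((j:ℕ)+(c:ℕ)+1) + 1 ≤ p) := by omega
      rw [if_neg h1, if_neg h2]
    rw [Matrix.det_of_lowerTriangular _ htri]
    have hdiag : ∀ r : Fin (n - (j:ℕ)), M.toBlocks₂₂ r r = -1 := by
      intro r
      have hcval : ((j.succAbove (e (Sum.inr r)) : Fin (n+1)) : ℕ) = (j:ℕ) + (r:ℕ) + 1 := by
        rw [succAbove_val, heR]
        have : ¬ ((j:ℕ) + (r:ℕ) < (j:ℕ)) := by omega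
        simp [this]
      simp only [Matrix.toBlocks₂₂, Matrix.of_apply, hM, Matrix.submatrix_apply]
      rw [hBval, hcval, heR]
      simp
    rw [Finset.prod_congr rfl (fun r _ => hdiag r)]
    simp
  rw [← Matrix.fromBlocks_toBlocks M, h12, h11, Matrix.det_fromBlocks_zero₁₂, hD]
  ring

lemma det_rec (p : ℕ) (φ : ℕ → ℤ → ℝ) (t : ℤ) (k : ℕ) :
    (PhiMat p φ t (k+1)).det
      = ∑ m ∈ Icc 1 p, φ m t * xi p φ (t - (m:ℤ)) ((k:ℤ) + 1 - m) := by
  set h : ℕ → ℝ := fun m => φ m t * xi p φ (t - (m:ℤ)) ((k:ℤ) + 1 - m) with hh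
  rw [Matrix.det_succ_row _ (Fin.last k)]
  have hterm : ∀ j : Fin (k+1),
      (-1:ℝ) ^ ((Fin.last k : ℕ) + (j:ℕ)) * (PhiMat p φ t (k+1)) (Fin.last k) j *
        ((PhiMat p φ t (k+1)).submatrix (Fin.last k).succAbove j.succAbove).det
      = (if k - (j:ℕ) + 1 ≤ p then h (k - (j:ℕ) + 1) else 0) := by
    intro j
    have hjk : (j:ℕ) ≤ k := Nat.lt_succ_iff.mp j.isLt
    rw [minor_det, PhiMat_apply]
    have hlast : ((Fin.last k : Fin (k+1)) : ℕ) = k := rfl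
    rw [hlast]
    have h1 : ¬ (k + 1 = (j:ℕ)) := by omega
    have h2 : (j:ℕ) ≤ k := hjk
    have harg : t - ((k+1:ℕ):ℤ) + (k:ℕ) + 1 = t := by push_cast; ring
    have hsign : (-1:ℝ) ^ (k + (j:ℕ)) * (-1:ℝ) ^ (k - (j:ℕ)) = 1 := by
      rw [← pow_add]
      have : k + (j:ℕ) + (k - (j:ℕ)) = 2 * k := by omega
      rw [this, pow_mul]
      norm_num
    have hxi : (PhiMat p φ (t - ((k:ℤ) + 1 - (j:ℕ))) (j:ℕ)).det
        = xi p φ (t - ((k:ℤ) + 1 - (j:ℕ))) ((j:ℕ):ℤ) := (xi_natCast _ _ _ _).symm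
    rw [if_neg h1]
    by_cases h3 : k - (j:ℕ) + 1 ≤ p
    · rw [if_pos ⟨h2, h3⟩, if_pos h3, harg, hh]
      have hxiarg : ((k:ℤ) + 1 - ((k - (j:ℕ) + 1 : ℕ):ℤ)) = ((j:ℕ):ℤ) := by
        push_cast [Nat.cast_sub hjk]; ring
      have hφarg : t - ((k:ℤ) + 1 - (j:ℕ)) = t - ((k - (j:ℕ) + 1 : ℕ):ℤ) := by
        push_cast [Nat.cast_sub hjk]; ring
      simp only [hxiarg]
      rw [hxi, ← hφarg]
      calc (-1:ℝ) ^ (k + (j:ℕ)) * φ (k - (j:ℕ) + 1) t *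
              ((-1:ℝ) ^ (k - (j:ℕ)) * xi p φ (t - ((k:ℤ) + 1 - (j:ℕ))) ((j:ℕ):ℤ))
          = ((-1:ℝ) ^ (k + (j:ℕ)) * (-1:ℝ) ^ (k - (j:ℕ))) *
              (φ (k - (j:ℕ) + 1) t * xi p φ (t - ((k:ℤ) + 1 - (j:ℕ))) ((j:ℕ):ℤ)) := by ring
        _ = _ := by rw [hsign]; ring
    · rw [if_neg (by tauto), if_neg h3]
      ring
  rw [Finset.sum_congr rfl (fun j _ => hterm j)]
  rw [Fin.sum_univ_eq_sum_range (fun jn => if k - jn + 1 ≤ p then h (k - jn + 1) else 0) (k+1)]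
  rw [← Finset.sum_range_reflect]
  have hrefl : ∀ i ∈ Finset.range (k+1),
      (if k - (k + 1 - 1 - i) + 1 ≤ p then h (k - (k + 1 - 1 - i) + 1) else 0)
        = (if i + 1 ≤ p then h (i+1) else 0) := by
    intro i hi
    have hik : i ≤ k := by simpa [Nat.lt_succ_iff] using hi
    have : k - (k + 1 - 1 - i) + 1 = i + 1 := by omega
    rw [this]
  rw [Finset.sum_congr rfl hrefl]
  have step1 : ∑ i ∈ Finset.range (k+1), (if i + 1 ≤ p then h (i+1) else 0)
      = ∑ m ∈ Icc 1 (k+1), (if m ≤ p then h m else 0) := by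
    rw [show Icc 1 (k+1) = Ico 1 (k+2) by rw [← Finset.Ico_add_one_right_eq_Icc]; rfl, Finset.sum_Ico_eq_sum_range]
    apply Finset.sum_congr (by norm_num)
    intro i _
    rw [Nat.add_comm 1 i]
  rw [step1]
  have hzero : ∀ m, k + 1 < m → h m = 0 := by
    intro m hm
    rw [hh]
    have : ((k:ℤ) + 1 - m) < 0 := by omega
    simp [xi_neg p φ _ this]
  set N := max p (k+1) with hN
  have e1 : ∑ m ∈ Icc 1 (k+1), (if m ≤ p then h m else 0)
      = ∑ m ∈ Icc 1 N, (if m ≤ p then h m else 0) := by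
    apply Finset.sum_subset (Finset.Icc_subset_Icc_right (le_max_right _ _))
    intro m hm hm'
    simp only [Finset.mem_Icc] at hm hm'
    have : k + 1 < m := by omega
    rw [hzero m this]
    simp
  have e2 : ∑ m ∈ Icc 1 p, h m = ∑ m ∈ Icc 1 N, (if m ≤ p then h m else 0) := by
    rw [Finset.sum_congr rfl (fun m hm => (if_pos (Finset.mem_Icc.mp hm).2).symm)]
    apply Finset.sum_subset (Finset.Icc_subset_Icc_right (le_max_left _ _))
    intro m hm hm'
    simp only [Finset.mem_Icc] at hm hm'
    have : ¬ m ≤ p := by omega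
    simp [this]
  rw [e1, ← e2]

lemma xi_rec (p : ℕ) (φ : ℕ → ℤ → ℝ) (t : ℤ) {k : ℤ} (hk : 1 ≤ k) :
    xi p φ t k = ∑ m ∈ Icc 1 p, φ m t * xi p φ (t - m) (k - m) := by
  obtain ⟨k', hk'⟩ : ∃ k' : ℕ, k = ((k' + 1 : ℕ) : ℤ) := ⟨(k-1).toNat, by omega⟩
  subst hk'
  rw [xi_natCast, det_rec]
  apply Finset.sum_congr rfl
  intro m _
  have harg : (((k' + 1 : ℕ):ℤ) - m) = ((k':ℤ) + 1 - m) := by push_cast; ring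
  rw [harg]

lemma partial_rec (p : ℕ) (φ : ℕ → ℤ → ℝ) (c : ℤ → ℝ) (t : ℤ) (n : ℕ) (hn : p ≤ n) :
    ∑ r ∈ range (n+1), xi p φ t r * c (t - r)
      = c t + ∑ m ∈ Icc 1 p, φ m t *
          ∑ s ∈ range (n - m + 1), xi p φ (t - m) s * c (t - m - s) := by
  rw [Finset.sum_range_succ']
  have hf0 : xi p φ t ((0:ℕ):ℤ) * c (t - ((0:ℕ):ℤ)) = c t := by
    norm_num [xi_zero]
  rw [hf0, add_comm]
  congr 1
  have hstep : ∀ i ∈ range n,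
      xi p φ t ((i+1 : ℕ):ℤ) * c (t - ((i+1:ℕ):ℤ))
        = ∑ m ∈ Icc 1 p, φ m t * (xi p φ (t - m) (((i+1:ℕ):ℤ) - m) * c (t - ((i+1:ℕ):ℤ))) := by
    intro i _
    rw [xi_rec p φ t (by push_cast; omega : (1:ℤ) ≤ ((i+1:ℕ):ℤ)), Finset.sum_mul]
    exact Finset.sum_congr rfl fun m _ => by ring
  rw [Finset.sum_congr rfl hstep, Finset.sum_comm]
  apply Finset.sum_congr rfl
  intro m hm
  obtain ⟨hm1, hmp⟩ := Finset.mem_Icc.mp hm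
  rw [← Finset.mul_sum]
  congr 1
  have hmn : m - 1 ≤ n := by omega
  rw [Finset.range_eq_Ico, ← Finset.sum_Ico_consecutive _ (Nat.zero_le (m-1)) hmn]
  have hz : ∑ i ∈ Ico 0 (m-1), xi p φ (t - m) (((i+1:ℕ):ℤ) - m) * c (t - ((i+1:ℕ):ℤ)) = 0 := by
    apply Finset.sum_eq_zero
    intro i hi
    have hi' : i < m - 1 := (Finset.mem_Ico.mp hi).2
    have : (((i+1:ℕ):ℤ) - m) < 0 := by push_cast; omega
    rw [xi_neg p φ _ this, zero_mul]
  rw [hz, zero_add, Finset.sum_Ico_eq_sum_range]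
  have hrange : n - (m-1) = n - m + 1 := by omega
  rw [hrange]
  apply Finset.sum_congr rfl
  intro s _
  have h1 : ((m - 1 + s + 1 : ℕ):ℤ) - m = (s:ℕ) := by push_cast [Nat.cast_sub hm1]; ring
  have h2 : t - ((m - 1 + s + 1 : ℕ):ℤ) = t - m - s := by push_cast [Nat.cast_sub hm1]; ring
  rw [h1, h2]

open MeasureTheory Filter

/-- Under Assumption 1, the MA(∞) process `Y_t = Σ_{r=0}^∞ ξ_{t,r} (φ_0(t−r) + ε_{t−r})`
solves the PAR(`p`) equation. -/
theorem ma_infinity_solves_par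
    (p : ℕ) (hp : 1 ≤ p) (φ : ℕ → ℤ → ℝ)
    {Ω : Type*} {m0 : MeasurableSpace Ω} {μ : Measure Ω} [IsProbabilityMeasure μ]
    (𝓕 : Filtration ℤ m0)
    (ε : ℤ → Ω → ℝ)
    (hεmeas : ∀ τ : ℤ, StronglyMeasurable[𝓕 τ] (ε τ))
    (hεL2 : ∀ τ : ℤ, MemLp (ε τ) 2 μ)
    (hεmart : ∀ τ : ℤ, μ[ε τ | 𝓕 (τ - 1)] =ᵐ[μ] 0)
    (hA1 : ∀ r : ℕ, BddAbove (Set.range fun τ : ℤ =>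
      (xi p φ τ r) ^ 2 * ∫ ω, (ε (τ - r) ω) ^ 2 ∂μ))
    (hA2 : Summable fun r : ℕ => ⨆ τ : ℤ,
      (xi p φ τ r) ^ 2 * ∫ ω, (ε (τ - r) ω) ^ 2 ∂μ)
    (mu : ℤ → ℝ)
    (hmu : ∀ t : ℤ, Tendsto
      (fun n : ℕ => ∑ r ∈ Finset.range (n + 1), xi p φ t r * φ 0 (t - r))
      atTop (nhds (mu t)))
    (Z : ℤ → Ω → ℝ)
    (hZL2 : ∀ t : ℤ, MemLp (Z t) 2 μ)
    (hZ : ∀ t : ℤ, Tendsto (fun n : ℕ =>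
        ∫ ω, ((∑ r ∈ Finset.range (n + 1), xi p φ t r * ε (t - r) ω) - Z t ω) ^ 2 ∂μ)
      atTop (nhds 0))
    (Y : ℤ → Ω → ℝ)
    (hY : ∀ t : ℤ, ∀ ω, Y t ω = mu t + Z t ω)
 :
    ∀ t : ℤ, Y t =ᵐ[μ] fun ω =>
      φ 0 t + (∑ m ∈ Finset.Icc 1 p, φ m t * Y (t - m) ω) + ε t ω := by
  intro t
  -- deterministic part
  have hmu_rec : mu t = φ 0 t + ∑ m ∈ Icc 1 p, φ m t * mu (t - m) := by
    have h1 : Tendsto (fun n : ℕ => ∑ r ∈ Finset.range ((n + p) + 1), xi p φ t r * φ 0 (t - r))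
        atTop (nhds (mu t)) := (hmu t).comp (tendsto_add_atTop_nat p)
    have h2 : Tendsto (fun n : ℕ => φ 0 t + ∑ m ∈ Icc 1 p, φ m t *
        ∑ s ∈ Finset.range ((n + p) - m + 1), xi p φ (t - m) s * φ 0 (t - m - s)) atTop
        (nhds (φ 0 t + ∑ m ∈ Icc 1 p, φ m t * mu (t - m))) := by
      apply Tendsto.const_add
      apply tendsto_finset_sum
      intro m hm
      obtain ⟨hm1, hmp⟩ := Finset.mem_Icc.mp hm
      apply Tendsto.const_mul
      have h3 := (hmu (t - m)).comp (tendsto_add_atTop_nat (p - m))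
      refine h3.congr fun n => ?_
      simp only [Function.comp_apply]
      have : n + (p - m) + 1 = (n + p) - m + 1 := by omega
      rw [this]
    have h1' : Tendsto (fun n : ℕ => φ 0 t + ∑ m ∈ Icc 1 p, φ m t *
        ∑ s ∈ Finset.range ((n + p) - m + 1), xi p φ (t - m) s * φ 0 (t - m - s)) atTop
        (nhds (mu t)) := by
      refine h1.congr fun n => ?_
      exact partial_rec p φ (φ 0) t (n + p) (Nat.le_add_left p n)
    exact tendsto_nhds_unique h1' h2
  -- stochastic part
  set S : ℤ → ℕ → Ω → ℝ := fun u n ω => ∑ r ∈ Finset.range (n+1), xi p φ u r * ε (u - r) ω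
    with hSdef
  have hSL2 : ∀ u n, MemLp (S u n) 2 μ := by
    intro u n
    exact memLp_finset_sum _ fun r _ => (hεL2 (u - r)).const_mul _
  set D : Ω → ℝ := fun ω => Z t ω - ε t ω - ∑ m ∈ Icc 1 p, φ m t * Z (t - m) ω with hDdef
  have hD2 : MemLp D 2 μ := by
    have : MemLp (fun ω => ∑ m ∈ Icc 1 p, φ m t * Z (t - m) ω) 2 μ :=
      memLp_finset_sum _ fun m _ => (hZL2 (t - m)).const_mul _
    exact ((hZL2 t).sub (hεL2 t)).sub this
  have hDrep : ∀ n : ℕ, ∀ ω, D ω = (Z t ω - S t (n+p) ω)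
      + ∑ m ∈ Icc 1 p, φ m t * (S (t-m) ((n+p)-m) ω - Z (t-m) ω) := by
    intro n ω
    have hp' := partial_rec p φ (fun u => ε u ω) t (n+p) (Nat.le_add_left p n)
    have hSrec : S t (n+p) ω = ε t ω + ∑ m ∈ Icc 1 p, φ m t * S (t-m) ((n+p)-m) ω := hp'
    rw [hDdef]
    simp only [mul_sub]
    rw [Finset.sum_sub_distrib, hSrec]
    ring
  have hDsq_int : Integrable (fun ω => D ω ^ 2) μ := hD2.integrable_sq
  have key : ∀ n : ℕ, ∫ ω, D ω ^ 2 ∂μ ≤ ((p:ℝ)+1) *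
      ((∫ ω, (S t (n+p) ω - Z t ω)^2 ∂μ)
        + ∑ m ∈ Icc 1 p, (φ m t)^2 * ∫ ω, (S (t-m) ((n+p)-m) ω - Z (t-m) ω)^2 ∂μ) := by
    intro n
    have hint0 : Integrable (fun ω => (Z t ω - S t (n+p) ω)^2) μ :=
      ((hZL2 t).sub (hSL2 t (n+p))).integrable_sq
    have hintm : ∀ m ∈ Icc 1 p,
        Integrable (fun ω => (φ m t * (S (t-m) ((n+p)-m) ω - Z (t-m) ω))^2) μ :=
      fun m _ => (((hSL2 (t-m) ((n+p)-m)).sub (hZL2 (t-m))).const_mul (φ m t)).integrable_sq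
    have hG_int : Integrable (fun ω => ((p:ℝ)+1) * ((Z t ω - S t (n+p) ω)^2
        + ∑ m ∈ Icc 1 p, (φ m t * (S (t-m) ((n+p)-m) ω - Z (t-m) ω))^2)) μ :=
      (hint0.add (integrable_finset_sum _ hintm)).const_mul _
    have hpt : ∀ ω, D ω ^ 2 ≤ ((p:ℝ)+1) * ((Z t ω - S t (n+p) ω)^2
        + ∑ m ∈ Icc 1 p, (φ m t * (S (t-m) ((n+p)-m) ω - Z (t-m) ω))^2) := by
      intro ω
      rw [hDrep n ω]
      set f : ℕ → ℝ := fun m => if m = 0 then Z t ω - S t (n+p) ω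
        else φ m t * (S (t-m) ((n+p)-m) ω - Z (t-m) ω) with hf
      have h0 : (0:ℕ) ∉ Icc 1 p := by simp
      have hfIcc : ∀ m ∈ Icc 1 p,
          f m = φ m t * (S (t-m) ((n+p)-m) ω - Z (t-m) ω) := by
        intro m hm
        have : m ≠ 0 := by have := (Finset.mem_Icc.mp hm).1; omega
        rw [hf]; simp only [this, if_false]
      have hsum : (Z t ω - S t (n+p) ω)
            + ∑ m ∈ Icc 1 p, φ m t * (S (t-m) ((n+p)-m) ω - Z (t-m) ω)
          = ∑ m ∈ insert 0 (Icc 1 p), f m := by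
        rw [Finset.sum_insert h0]
        congr 1
        exact (Finset.sum_congr rfl hfIcc).symm
      rw [hsum]
      have hcs := sq_sum_le_card_mul_sum_sq (s := insert 0 (Icc 1 p)) (f := f)
      have hcard : (#(insert 0 (Icc 1 p)) : ℝ) = (p:ℝ) + 1 := by
        rw [Finset.card_insert_of_notMem h0, Nat.card_Icc]
        have hpc : p + 1 - 1 + 1 = p + 1 := by omega
        rw [hpc]
        push_cast
        ring
      rw [hcard] at hcs
      refine hcs.trans (le_of_eq ?_)
      congr 1
      rw [Finset.sum_insert h0]
      congr 1
      exact Finset.sum_congr rfl fun m hm => by rw [hfIcc m hm]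
    calc ∫ ω, D ω ^ 2 ∂μ
        ≤ ∫ ω, ((p:ℝ)+1) * ((Z t ω - S t (n+p) ω)^2
            + ∑ m ∈ Icc 1 p, (φ m t * (S (t-m) ((n+p)-m) ω - Z (t-m) ω))^2) ∂μ :=
          integral_mono hDsq_int hG_int hpt
      _ = ((p:ℝ)+1) * ((∫ ω, (S t (n+p) ω - Z t ω)^2 ∂μ)
            + ∑ m ∈ Icc 1 p, (φ m t)^2 * ∫ ω, (S (t-m) ((n+p)-m) ω - Z (t-m) ω)^2 ∂μ) := by
          rw [integral_const_mul, integral_add hint0 (integrable_finset_sum _ hintm),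
            integral_finset_sum _ hintm]
          congr 1
          congr 1
          · simp only [show ∀ a b : ℝ, (a-b)^2 = (b-a)^2 from fun a b => by ring]
          · refine Finset.sum_congr rfl fun m hm => ?_
            simp only [mul_pow]
            rw [integral_const_mul]
  have hb : Tendsto (fun n : ℕ => ((p:ℝ)+1) * ((∫ ω, (S t (n+p) ω - Z t ω)^2 ∂μ)
      + ∑ m ∈ Icc 1 p, (φ m t)^2 * ∫ ω, (S (t-m) ((n+p)-m) ω - Z (t-m) ω)^2 ∂μ)) atTop
      (nhds 0) := by
    have h0 : Tendsto (fun n : ℕ => ∫ ω, (S t (n+p) ω - Z t ω)^2 ∂μ) atTop (nhds 0) := by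
      refine ((hZ t).comp (tendsto_add_atTop_nat p)).congr fun n => ?_
      simp only [Function.comp_apply, hSdef]
    have hm2 : ∀ m ∈ Icc 1 p, Tendsto
        (fun n : ℕ => ∫ ω, (S (t-m) ((n+p)-m) ω - Z (t-m) ω)^2 ∂μ) atTop (nhds 0) := by
      intro m hm
      obtain ⟨hm1, hmp⟩ := Finset.mem_Icc.mp hm
      refine ((hZ (t-m)).comp (tendsto_add_atTop_nat (p-m))).congr fun n => ?_
      simp only [Function.comp_apply, hSdef]
      have : n + (p-m) + 1 = (n+p) - m + 1 := by omega
      rw [this]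
    have := Tendsto.const_mul ((p:ℝ)+1)
      (h0.add (tendsto_finset_sum (Icc 1 p) fun m hm => (hm2 m hm).const_mul ((φ m t)^2)))
    simpa using this
  have hle0 : ∫ ω, D ω ^ 2 ∂μ ≤ 0 := ge_of_tendsto' hb key
  have hInt0 : ∫ ω, D ω ^ 2 ∂μ = 0 :=
    le_antisymm hle0 (integral_nonneg fun ω => sq_nonneg _)
  have hDsq0 : (fun ω => D ω ^ 2) =ᵐ[μ] 0 :=
    (integral_eq_zero_iff_of_nonneg (fun ω => sq_nonneg _) hDsq_int).mp hInt0
  filter_upwards [hDsq0] with ω hω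
  have hD0 : D ω = 0 := by
    have h2 : D ω ^ 2 = 0 := by simpa using hω
    exact pow_eq_zero_iff two_ne_zero |>.mp h2
  simp only [hDdef] at hD0
  simp only [hY]
  have hsplit : ∑ m ∈ Icc 1 p, φ m t * (mu (t-m) + Z (t-m) ω)
      = (∑ m ∈ Icc 1 p, φ m t * mu (t-m)) + ∑ m ∈ Icc 1 p, φ m t * Z (t-m) ω := by
    rw [← Finset.sum_add_distrib]
    exact Finset.sum_congr rfl fun m _ => by ring
  rw [hsplit]
  linarith [hmu_rec, hD0]
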